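/- For any forest Q with n vertices, the HOMFLY polynomial admits the closed form f(Q) = a^{−n} · Σ_{i,j ≥ 0} c_{i,j}(Q) · z^{n−2i} · (1 − a^{−2})^j. -/

import Mathlib

open scoped Classical

noncomputable section

abbrev K : Type := FractionRing (MvPolynomial Bool ℚ)

/-- The variable `a` of the HOMFLY polynomial. -/
def A : K := algebraMap (MvPolynomial Bool ℚ) K (MvPolynomial.X false)

/-- The variable `z` of the HOMFLY polynomial. -/
def Z : K := algebraMap (MvPolynomial Bool ℚ) K (MvPolynomial.X true)

/-- A rule assigning a value to every finite simple graph. -/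
abbrev GraphFun : Type 1 :=
  ∀ (V : Type) [Fintype V] [DecidableEq V], SimpleGraph V → K

/-- `v` is a leaf whose unique neighbor is `w`. -/
def IsLeaf {V : Type} (G : SimpleGraph V) (v w : V) : Prop :=
  G.neighborSet v = {w}

/-- The defining recursion of the HOMFLY polynomial of a forest:
value `1` on the empty graph, `(z+z⁻¹)/a − z⁻¹/a³` on a single vertex,
the leaf-removal recursion, and multiplicativity over disjoint unions
(formulated via vertex subsets with no crossing edges). -/
def HomflyRules (f : GraphFun) : Prop :=
  (∀ (V : Type) [Fintype V] [DecidableEq V] (G : SimpleGraph V),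
      IsEmpty V → f V G = 1) ∧
  (∀ (V : Type) [Fintype V] [DecidableEq V] (G : SimpleGraph V),
      Fintype.card V = 1 → f V G = (Z + Z⁻¹) / A - Z⁻¹ / A ^ 3) ∧
  (∀ (V : Type) [Fintype V] [DecidableEq V] (G : SimpleGraph V),
      G.IsAcyclic → ∀ v w : V, IsLeaf G v w →
      f V G = (Z / A) * f ↥{x : V | x ≠ v} (G.induce {x : V | x ≠ v}) +
        (1 / A ^ 2) * f ↥{x : V | x ≠ v ∧ x ≠ w} (G.induce {x : V | x ≠ v ∧ x ≠ w})) ∧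
  (∀ (V : Type) [Fintype V] [DecidableEq V] (G : SimpleGraph V),
      G.IsAcyclic → ∀ s : Set V, (∀ x ∈ s, ∀ y ∉ s, ¬ G.Adj x y) →
      f V G = f ↥s (G.induce s) * f ↥sᶜ (G.induce sᶜ))

/-- A rooting of a forest: a choice of one root in each connected component,
encoded by the set of roots together with the induced parent function. -/
structure Rooting {V : Type} [Fintype V] [DecidableEq V] (G : SimpleGraph V) where
  roots : Set V
  parent : V → V
  parent_of_root : ∀ v ∈ roots, parent v = v
  adj_parent : ∀ v, v ∉ roots → G.Adj v (parent v)
  reaches : ∀ v : V, ∃ n : ℕ, parent^[n] v ∈ roots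
  unique_root : ∀ v : V, ∃! r : V, r ∈ roots ∧ G.Reachable v r

/-- The set of vertices which are the parent of at least one vertex of `I`. -/
def parentsOf {V : Type} [Fintype V] [DecidableEq V] {G : SimpleGraph V}
    (R : Rooting G) (I : Finset V) : Set V :=
  {w : V | ∃ v ∈ I, v ∉ R.roots ∧ R.parent v = w}

/-- `I` is an independent set of vertices. -/
def IsIndep {V : Type} (G : SimpleGraph V) (I : Finset V) : Prop :=
  ∀ x ∈ I, ∀ y ∈ I, ¬ G.Adj x y

/-- `c_{i,j}(Q, R)`: the number of independent sets `I` of size `i` such that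
exactly `i − j` vertices are the parent of at least one vertex of `I`. -/
def cCoeff {V : Type} [Fintype V] [DecidableEq V] (G : SimpleGraph V)
    (R : Rooting G) (i j : ℕ) : ℕ :=
  Set.ncard {I : Finset V | I.card = i ∧ IsIndep G I ∧ (parentsOf R I).ncard + j = i}
section Basics

lemma A_ne_zero : A ≠ 0 := by
  have : Function.Injective (algebraMap (MvPolynomial Bool ℚ) K) :=
    IsFractionRing.injective _ _
  simpa [A, map_ne_zero_iff _ this] using MvPolynomial.X_ne_zero (R := ℚ) false

lemma Z_ne_zero : Z ≠ 0 := by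
  have : Function.Injective (algebraMap (MvPolynomial Bool ℚ) K) :=
    IsFractionRing.injective _ _
  simpa [Z, map_ne_zero_iff _ this] using MvPolynomial.X_ne_zero (R := ℚ) true

lemma single_value : (Z + Z⁻¹) / A - Z⁻¹ / A ^ 3 = A⁻¹ * (Z + Z⁻¹ * (1 - (A⁻¹) ^ 2)) := by
  rw [div_eq_mul_inv, div_eq_mul_inv, ← inv_pow]
  ring

end Basics

section RootingLemmas

variable {V : Type} [Fintype V] [DecidableEq V] {G : SimpleGraph V}

/-- Reachability along iterates of a "parent-like" map. -/
lemma reachable_iterate {p : V → V} (hp : ∀ y, p y = y ∨ G.Adj y (p y)) (v : V) (n : ℕ) :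
    G.Reachable v (p^[n] v) := by
  induction n with
  | zero => exact SimpleGraph.Reachable.refl v
  | succ n ih =>
    rw [Function.iterate_succ_apply']
    rcases hp (p^[n] v) with h | h
    · rwa [h]
    · exact ih.trans h.reachable

namespace Rooting

variable (R : Rooting G)

lemma parent_step (y : V) : R.parent y = y ∨ G.Adj y (R.parent y) := by
  by_cases h : y ∈ R.roots
  · exact Or.inl (R.parent_of_root y h)
  · exact Or.inr (R.adj_parent y h)

noncomputable def height (v : V) : ℕ := Nat.find (R.reaches v)

lemma height_spec (v : V) : R.parent^[R.height v] v ∈ R.roots := Nat.find_spec (R.reaches v)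

lemma height_min {v : V} {m : ℕ} (h : m < R.height v) : R.parent^[m] v ∉ R.roots :=
  Nat.find_min (R.reaches v) h

lemma height_eq_zero {v : V} : R.height v = 0 ↔ v ∈ R.roots := by
  rw [height, Nat.find_eq_zero]; rfl

/-- The root of the component of `v`. -/
noncomputable def rootOf (v : V) : V := R.parent^[R.height v] v

lemma rootOf_mem (v : V) : R.rootOf v ∈ R.roots := R.height_spec v

lemma reachable_rootOf (v : V) : G.Reachable v (R.rootOf v) :=
  reachable_iterate R.parent_step v _

lemma rootOf_unique {v r : V} (hr : r ∈ R.roots) (hvr : G.Reachable v r) :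
    r = R.rootOf v := by
  obtain ⟨r', -, hu⟩ := R.unique_root v
  rw [hu r ⟨hr, hvr⟩, hu (R.rootOf v) ⟨R.rootOf_mem v, R.reachable_rootOf v⟩]

/-- The iterates of the parent map up to the height are pairwise distinct. -/
lemma iterate_injOn {v : V} {i j : ℕ} (hij : i < j) (hj : j ≤ R.height v)
    (h : R.parent^[i] v = R.parent^[j] v) : False := by
  set d := j - i with hd
  have hd1 : 1 ≤ d := by omega
  have key : R.parent^[R.height v - d] v ∈ R.roots := by
    have h1 : R.height v - d = (R.height v - j) + i := by omega
    have h2 : R.height v = (R.height v - j) + j := by omega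
    rw [h1, Function.iterate_add_apply, h, ← Function.iterate_add_apply, ← h2]
    exact R.height_spec v
  exact R.height_min (by omega) key

/-- The support of the orbit walk. -/
noncomputable def orbitList (v : V) : List V :=
  (List.range (R.height v + 1)).map (fun k => R.parent^[k] v)

lemma orbitList_nodup (v : V) : (R.orbitList v).Nodup := by
  refine List.Nodup.map_on ?_ List.nodup_range
  intro i hi j hj hij
  simp only [List.mem_range] at hi hj
  by_contra hne
  rcases Nat.lt_or_ge i j with h | h
  · exact R.iterate_injOn h (by omega) hij
  · exact R.iterate_injOn (by omega) (by omega) hij.symm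

lemma exists_orbitWalk (v : V) :
    ∃ P : G.Walk v (R.rootOf v), P.support = R.orbitList v := by
  suffices H : ∀ (m : ℕ) (v : V), R.height v = m →
      ∃ P : G.Walk v (R.rootOf v), P.support = R.orbitList v by
    exact H _ v rfl
  intro m
  induction m with
  | zero =>
    intro v hv
    refine ⟨(SimpleGraph.Walk.nil).copy rfl ?_, ?_⟩
    · simp [rootOf, hv]
    · simp [orbitList, hv]
  | succ m ih =>
    intro v hv
    have hvr : v ∉ R.roots := by
      intro h; rw [← R.height_eq_zero] at h; omega
    have hpm : R.height (R.parent v) = m := by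
      have h1 : ∀ k, R.parent^[k] (R.parent v) = R.parent^[k + 1] v := by
        intro k; rw [Function.iterate_succ_apply]
      have hs : R.parent^[m] (R.parent v) ∈ R.roots := by
        rw [h1]; rw [← hv]; exact R.height_spec v
      have hm : ∀ k < m, R.parent^[k] (R.parent v) ∉ R.roots := by
        intro k hk; rw [h1]; exact R.height_min (by omega)
      rw [Rooting.height]
      exact (Nat.find_eq_iff (R.reaches (R.parent v))).mpr ⟨hs, fun k hk => hm k hk⟩
  -- continue
    obtain ⟨P', hP'⟩ := ih (R.parent v) hpm
    have hend : R.rootOf (R.parent v) = R.rootOf v := by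
      rw [rootOf, rootOf, hpm, hv, Function.iterate_succ_apply]
    refine ⟨(SimpleGraph.Walk.cons (R.adj_parent v hvr) P').copy rfl hend, ?_⟩
    rw [SimpleGraph.Walk.support_copy, SimpleGraph.Walk.support_cons, hP']
    rw [orbitList, orbitList, hv, hpm]
    rw [List.range_succ_eq_map (n := m + 1)]
    simp only [List.map_cons, Function.iterate_zero_apply, List.map_map]
    congr 1

lemma mem_orbitList {v x : V} : x ∈ R.orbitList v ↔ ∃ k ≤ R.height v, R.parent^[k] v = x := by
  simp only [orbitList, List.mem_map, List.mem_range]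
  constructor
  · rintro ⟨k, hk, rfl⟩; exact ⟨k, by omega, rfl⟩
  · rintro ⟨k, hk, rfl⟩; exact ⟨k, by omega, rfl⟩

end Rooting

end RootingLemmas
section PathLemmas

variable {V : Type} [Fintype V] [DecidableEq V] {G : SimpleGraph V}

/-- The inclusion homomorphism from an induced subgraph. -/
def inducedHom (G : SimpleGraph V) (s : Set V) : (G.induce s) →g G where
  toFun := Subtype.val
  map_rel' := fun {a b} h => h

lemma isAcyclic_induce (h : G.IsAcyclic) (s : Set V) : (G.induce s).IsAcyclic := by
  intro x c hc
  exact h (c.map (inducedHom G s)) (hc.map Subtype.val_injective)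

/-- Reachability in an induced subgraph yields a path in `G` with support in `s`. -/
lemma induce_reachable_path {s : Set V} {x y : ↥s} (h : (G.induce s).Reachable x y) :
    ∃ P : G.Walk (x : V) (y : V), P.IsPath ∧ ∀ z ∈ P.support, z ∈ s := by
  obtain ⟨w⟩ := h
  refine ⟨((w.map (inducedHom G s)).toPath.1.copy rfl rfl),
    by exact (SimpleGraph.Walk.isPath_copy _ _ _).mpr (w.map (inducedHom G s)).toPath.prop,
    fun z hz => ?_⟩
  replace hz := (congrArg (z ∈ ·) (SimpleGraph.Walk.support_copy _ _ _)).mp hz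
  have h1 : z ∈ (w.map (inducedHom G s)).support :=
    SimpleGraph.Walk.support_bypass_subset _ hz
  rw [SimpleGraph.Walk.support_map, List.mem_map] at h1
  obtain ⟨a, -, rfl⟩ := h1
  exact a.prop

namespace Rooting

variable (R : Rooting G)

/-- The orbit walk is a path. -/
lemma exists_orbitPath (v : V) :
    ∃ P : G.Walk v (R.rootOf v), P.IsPath ∧ P.support = R.orbitList v := by
  obtain ⟨P, hP⟩ := R.exists_orbitWalk v
  refine ⟨P, ?_, hP⟩
  rw [SimpleGraph.Walk.isPath_def, hP]
  exact R.orbitList_nodup v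

/-- Iterates of parent never hit a childless vertex distinct from the start. -/
lemma iterate_ne {v : V} (hcl : ∀ u, u ∉ R.roots → R.parent u ≠ v) {x : V}
    (hx : x ≠ v) (k : ℕ) : R.parent^[k] x ≠ v := by
  induction k with
  | zero => exact hx
  | succ k ih =>
    rw [Function.iterate_succ_apply']
    set y := R.parent^[k] x
    by_cases hy : y ∈ R.roots
    · rw [R.parent_of_root y hy]; exact ih
    · exact hcl y hy

lemma height_parent {u : V} (hu : u ∉ R.roots) :
    R.height u = R.height (R.parent u) + 1 := by
  rw [Rooting.height, Nat.find_eq_iff]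
  refine ⟨?_, ?_⟩
  · rw [Function.iterate_succ_apply]
    exact R.height_spec (R.parent u)
  · intro k hk
    match k with
    | 0 => exact hu
    | (j+1) =>
      rw [Function.iterate_succ_apply]
      exact R.height_min (by omega)

/-- Key structural lemma: every neighbor of a childless vertex `v`
is the parent of `v` (in particular `v` is not a root). -/
lemma childless_adj (hforest : G.IsAcyclic)
    {v : V} (hcl : ∀ u, u ∉ R.roots → R.parent u ≠ v) {x : V} (hadj : G.Adj v x) :
    v ∉ R.roots ∧ R.parent v = x := by
  obtain ⟨P, hPp, hPs⟩ := R.exists_orbitPath v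
  by_cases hx : x ∈ P.support
  · -- x is on the orbit path of v; conclude p v = x
    have hQP : (P.takeUntil x hx) = (SimpleGraph.Path.singleton hadj : G.Walk v x) := by
      have := hforest.path_unique ⟨P.takeUntil x hx, hPp.takeUntil hx⟩
        (SimpleGraph.Path.singleton hadj)
      exact congrArg Subtype.val this
    have hspec := P.take_spec hx
    rw [hQP] at hspec
    have hsup' := congrArg SimpleGraph.Walk.support hspec
    rw [SimpleGraph.Walk.support_append] at hsup'
    simp only [SimpleGraph.Path.singleton, SimpleGraph.Walk.support_cons,
      SimpleGraph.Walk.support_nil] at hsup'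
    -- hsup' : v :: x :: tail = P.support
    have hge : 1 ≤ R.height v := by
      by_contra h
      have h0 : R.height v = 0 := by omega
      have h1 : P.support = [v] := by rw [hPs, orbitList, h0]; simp
      rw [h1] at hsup'; simp at hsup'
    have hvr : v ∉ R.roots := by
      intro hr; rw [← R.height_eq_zero] at hr; omega
    refine ⟨hvr, ?_⟩
    have h2 : P.support = v :: R.parent v :: ((List.range (R.height v - 1)).map
        (fun k => R.parent^[k+2] v)) := by
      rw [hPs, orbitList]
      obtain ⟨m, hm⟩ : ∃ m, R.height v = m + 1 := ⟨R.height v - 1, by omega⟩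
      rw [hm]
      rw [List.range_succ_eq_map (n := m + 1), List.range_succ_eq_map (n := m)]
      simp only [List.map_cons, Function.iterate_zero_apply, List.map_map]
      constructor
    rw [← hsup'] at h2
    have h3 := (List.cons.injEq _ _ _ _).mp h2
    have h4 := (List.cons.injEq _ _ _ _).mp h3.2
    exact h4.1.symm
  · -- x not on the orbit path: derive a contradiction
    exfalso
    have hC : (SimpleGraph.Walk.cons hadj.symm P).IsPath := hPp.cons hx
    have hroot : R.rootOf x = R.rootOf v :=
      (R.rootOf_unique (R.rootOf_mem v) ((hadj.symm.reachable).trans (R.reachable_rootOf v))).symm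
    obtain ⟨Q, hQp, hQs⟩ := R.exists_orbitPath x
    have hQP : (SimpleGraph.Walk.cons hadj.symm P) = Q.copy rfl hroot := by
      have := hforest.path_unique ⟨SimpleGraph.Walk.cons hadj.symm P, hC⟩
        ⟨Q.copy rfl hroot, by rwa [SimpleGraph.Walk.isPath_copy]⟩
      exact congrArg Subtype.val this
    have hsupQ : (SimpleGraph.Walk.cons hadj.symm P).support = Q.support := by
      rw [hQP, SimpleGraph.Walk.support_copy]
    rw [SimpleGraph.Walk.support_cons, hQs, hPs] at hsupQ
    -- v lies in the orbit of x, contradicting iterate_ne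
    have hv_mem : v ∈ R.orbitList x := by
      rw [← hsupQ]
      exact List.mem_cons_of_mem _ (by rw [R.mem_orbitList]; exact ⟨0, by omega, rfl⟩)
    rw [R.mem_orbitList] at hv_mem
    obtain ⟨k, -, hk⟩ := hv_mem
    exact R.iterate_ne hcl (hadj.ne') k hk

lemma exists_childless [Nonempty V] : ∃ v : V, ∀ u, u ∉ R.roots → R.parent u ≠ v := by
  obtain ⟨v, -, hv⟩ := Finset.exists_max_image Finset.univ R.height
    ⟨Classical.arbitrary V, Finset.mem_univ _⟩
  refine ⟨v, fun u hu hpu => ?_⟩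
  have h1 : R.height u = R.height (R.parent u) + 1 := R.height_parent hu
  rw [hpu] at h1
  have := hv u (Finset.mem_univ u)
  omega

end Rooting

end PathLemmas
section Restrictions

variable {V : Type} [Fintype V] [DecidableEq V] {G : SimpleGraph V}

namespace Rooting

variable (R : Rooting G)

lemma parent_ne {v : V} (hcl : ∀ u, u ∉ R.roots → R.parent u ≠ v) {y : V} (hy : y ≠ v) :
    R.parent y ≠ v := by
  by_cases h : y ∈ R.roots
  · rw [R.parent_of_root y h]; exact hy
  · exact hcl y h

/-- Parent map on the complement of a childless vertex. -/
noncomputable def par1 (v : V) (hcl : ∀ u, u ∉ R.roots → R.parent u ≠ v) :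
    ↥{x : V | x ≠ v} → ↥{x : V | x ≠ v} :=
  fun x => ⟨R.parent (x : V), R.parent_ne hcl x.prop⟩

lemma par1_iterate (v : V) (hcl : ∀ u, u ∉ R.roots → R.parent u ≠ v)
    (x : ↥{x : V | x ≠ v}) (n : ℕ) :
    (R.par1 v hcl)^[n] x = ⟨R.parent^[n] (x : V), R.iterate_ne hcl x.prop n⟩ := by
  induction n with
  | zero => simp
  | succ n ih =>
    apply Subtype.ext
    rw [Function.iterate_succ_apply', ih]
    exact (Function.iterate_succ_apply' R.parent n (x : V)).symm

lemma par1_step (v : V) (hcl : ∀ u, u ∉ R.roots → R.parent u ≠ v) (y : ↥{x : V | x ≠ v}) :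
    R.par1 v hcl y = y ∨ (G.induce {x : V | x ≠ v}).Adj y (R.par1 v hcl y) := by
  rcases R.parent_step (y : V) with h | h
  · exact Or.inl (Subtype.ext h)
  · exact Or.inr h

/-- Restriction of a rooting to the complement of a childless vertex. -/
noncomputable def restrict1 (v : V) (hcl : ∀ u, u ∉ R.roots → R.parent u ≠ v) :
    Rooting (G.induce {x : V | x ≠ v}) where
  roots := {x | (x : V) ∈ R.roots}
  parent := R.par1 v hcl
  parent_of_root := fun x hx => Subtype.ext (R.parent_of_root (x : V) hx)
  adj_parent := fun x hx => R.adj_parent (x : V) hx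
  reaches := fun x =>
    ⟨R.height (x : V), by rw [R.par1_iterate]; exact R.height_spec (x : V)⟩
  unique_root := by
    intro x
    refine ⟨⟨R.rootOf (x : V), R.iterate_ne hcl x.prop _⟩, ⟨R.rootOf_mem (x : V), ?_⟩, ?_⟩
    · have := reachable_iterate (G := G.induce {x : V | x ≠ v}) (R.par1_step v hcl) x
        (R.height (x : V))
      rwa [R.par1_iterate] at this
    · rintro r' ⟨hr'm, hr'r⟩
      have hGr : G.Reachable (x : V) (r' : V) := hr'r.map (inducedHom G _)
      exact Subtype.ext (R.rootOf_unique hr'm hGr)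

/-- Parent map after deleting a leaf `v` and its parent `w`. -/
noncomputable def par2 (v w : V) (hcl : ∀ u, u ∉ R.roots → R.parent u ≠ v) :
    ↥{x : V | x ≠ v ∧ x ≠ w} → ↥{x : V | x ≠ v ∧ x ≠ w} :=
  fun x => if h : R.parent (x : V) = w then x
    else ⟨R.parent (x : V), ⟨R.parent_ne hcl x.prop.1, h⟩⟩

lemma par2_step (v w : V) (hcl : ∀ u, u ∉ R.roots → R.parent u ≠ v)
    (y : ↥{x : V | x ≠ v ∧ x ≠ w}) :
    R.par2 v w hcl y = y ∨ (G.induce {x : V | x ≠ v ∧ x ≠ w}).Adj y (R.par2 v w hcl y) := by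
  rw [par2]
  rcases Classical.em (R.parent (y : V) = w) with h | h
  · rw [dif_pos h]; exact Or.inl rfl
  · rw [dif_neg h]
    rcases R.parent_step (y : V) with h2 | h2
    · exact Or.inl (Subtype.ext h2)
    · exact Or.inr h2

lemma par2_reaches (v w : V) (hcl : ∀ u, u ∉ R.roots → R.parent u ≠ v)
    (x : ↥{x : V | x ≠ v ∧ x ≠ w}) :
    ∃ n, ((R.par2 v w hcl)^[n] x : V) ∈ R.roots ∨
      R.parent (((R.par2 v w hcl)^[n] x : ↥{x : V | x ≠ v ∧ x ≠ w}) : V) = w := by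
  have hQ : ∃ m, R.parent^[m] (x : V) ∈ R.roots ∨ R.parent (R.parent^[m] (x : V)) = w :=
    ⟨R.height (x : V), Or.inl (R.height_spec (x : V))⟩
  set k := Nat.find hQ with hk
  have hc1 : ∀ j ≤ k, R.parent^[j] (x : V) ≠ w := by
    intro j hj hjw
    match j, hjw with
    | 0, hjw => exact x.prop.2 hjw
    | (i+1), hjw =>
      have hi : R.parent (R.parent^[i] (x : V)) = w :=
        (Function.iterate_succ_apply' R.parent i (x : V)).symm.trans hjw
      exact Nat.find_min hQ (m := i) (by omega) (Or.inr hi)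
  have hc2 : ∀ j (hj : j ≤ k), (R.par2 v w hcl)^[j] x = ⟨R.parent^[j] (x : V),
      ⟨R.iterate_ne hcl x.prop.1 j, hc1 j hj⟩⟩ := by
    intro j
    induction j with
    | zero => intro _; simp
    | succ j ih =>
      intro hj
      rw [Function.iterate_succ_apply', ih (by omega), par2]
      simp only
      rw [dif_neg ((Function.iterate_succ_apply' R.parent j (x : V)) ▸ hc1 (j+1) hj)]
      apply Subtype.ext
      exact (Function.iterate_succ_apply' R.parent j (x : V)).symm
  refine ⟨k, ?_⟩
  rw [hc2 k le_rfl]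
  exact Nat.find_spec hQ

/-- After deleting a childless leaf `v` and its parent `w`, re-root each orphaned
child of `w` at itself. -/
noncomputable def restrict2 (hforest : G.IsAcyclic) (v w : V)
    (hcl : ∀ u, u ∉ R.roots → R.parent u ≠ v) :
    Rooting (G.induce {x : V | x ≠ v ∧ x ≠ w}) where
  roots := {x | (x : V) ∈ R.roots ∨ R.parent (x : V) = w}
  parent := R.par2 v w hcl
  parent_of_root := by
    intro x hx
    rcases Classical.em (R.parent (x : V) = w) with h | h
    · rw [par2, dif_pos h]
    · rcases hx with hx | hx
      · rw [par2, dif_neg h]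
        exact Subtype.ext (R.parent_of_root (x : V) hx)
      · exact absurd hx h
  adj_parent := by
    intro x hx
    have h1 : ¬ ((x : V) ∈ R.roots ∨ R.parent (x : V) = w) := hx
    push_neg at h1
    rw [par2, dif_neg h1.2]
    exact R.adj_parent (x : V) h1.1
  reaches := R.par2_reaches v w hcl
  unique_root := by
    intro x
    -- main asymmetric impossibility
    have main : ∀ r1 r2 : ↥{x : V | x ≠ v ∧ x ≠ w}, (r1 : V) ∈ R.roots →
        (r2 : V) ∉ R.roots →
        R.parent (r2 : V) = w → ∀ P : G.Walk (r2 : V) (r1 : V), P.IsPath →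
        (∀ z ∈ P.support, z ∈ {x : V | x ≠ v ∧ x ≠ w}) → False := by
      intro r1 r2 h1 h2 hpw P hPp hPs
      have hroot : (r1 : V) = R.rootOf (r2 : V) := R.rootOf_unique h1 P.reachable
      obtain ⟨O, hOp, hOs⟩ := R.exists_orbitPath (r2 : V)
      have hPO : P = O.copy rfl hroot.symm := by
        have := hforest.path_unique ⟨P, hPp⟩ ⟨O.copy rfl hroot.symm,
          by rwa [SimpleGraph.Walk.isPath_copy]⟩
        exact congrArg Subtype.val this
      have hwmem : w ∈ O.support := by
        rw [hOs, R.mem_orbitList]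
        refine ⟨1, ?_, by simpa using hpw⟩
        have : R.height (r2 : V) ≠ 0 := fun h0 => h2 (R.height_eq_zero.mp h0)
        omega
      have : w ∈ P.support := by rw [hPO, SimpleGraph.Walk.support_copy]; exact hwmem
      exact (hPs w this).2 rfl
    have key : ∀ r1 r2 : ↥{x : V | x ≠ v ∧ x ≠ w},
        ((r1 : V) ∈ R.roots ∨ R.parent (r1 : V) = w) →
        ((r2 : V) ∈ R.roots ∨ R.parent (r2 : V) = w) →
        (G.induce {x : V | x ≠ v ∧ x ≠ w}).Reachable r1 r2 → r1 = r2 := by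
      intro r1 r2 h1 h2 hreach
      by_contra hne
      have hvne : (r1 : V) ≠ (r2 : V) := fun h => hne (Subtype.ext h)
      obtain ⟨P, hPp, hPs⟩ := induce_reachable_path hreach
      by_cases hb1 : (r1 : V) ∈ R.roots
      · by_cases hb2 : (r2 : V) ∈ R.roots
        · have e1 : (r1 : V) = R.rootOf (r1 : V) :=
            R.rootOf_unique hb1 (SimpleGraph.Reachable.refl _)
          have e2 : (r2 : V) = R.rootOf (r1 : V) := R.rootOf_unique hb2 P.reachable
          exact hvne (e1.trans e2.symm)
        · exact main r1 r2 hb1 hb2 (h2.resolve_left hb2) P.reverse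
            (by rwa [SimpleGraph.Walk.isPath_reverse_iff])
            (by intro z hz; rw [SimpleGraph.Walk.support_reverse] at hz
                exact hPs z (List.mem_reverse.mp hz))
      · have hpw1 : R.parent (r1 : V) = w := h1.resolve_left hb1
        by_cases hb2 : (r2 : V) ∈ R.roots
        · exact main r2 r1 hb2 hb1 hpw1 P hPp hPs
        · have hpw2 : R.parent (r2 : V) = w := h2.resolve_left hb2
          have ha1 : G.Adj (r1 : V) w := by
            have := R.adj_parent _ hb1; rwa [hpw1] at this
          have ha2 : G.Adj w (r2 : V) := by
            have := R.adj_parent _ hb2; rw [hpw2] at this; exact this.symm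
          have hM : (SimpleGraph.Walk.cons ha1 (SimpleGraph.Walk.cons ha2
              SimpleGraph.Walk.nil)).IsPath := by
            rw [SimpleGraph.Walk.isPath_def]
            simp only [SimpleGraph.Walk.support_cons, SimpleGraph.Walk.support_nil]
            refine List.nodup_cons.mpr ⟨?_, List.nodup_cons.mpr ⟨?_, List.nodup_singleton _⟩⟩
            · simp only [List.mem_cons, List.not_mem_nil, or_false]
              rintro (h | h)
              · exact ha1.ne h
              · exact hvne h
            · simp only [List.mem_cons, List.not_mem_nil, or_false]
              intro h
              exact ha2.ne h
          have hMP : (SimpleGraph.Walk.cons ha1 (SimpleGraph.Walk.cons ha2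
              SimpleGraph.Walk.nil)) = P := by
            have := hforest.path_unique ⟨_, hM⟩ ⟨P, hPp⟩
            exact congrArg Subtype.val this
          have : w ∈ P.support := by rw [← hMP]; simp
          exact (hPs w this).2 rfl
    obtain ⟨nn, hnn⟩ := R.par2_reaches v w hcl x
    set r : ↥{x : V | x ≠ v ∧ x ≠ w} := (R.par2 v w hcl)^[nn] x with hr
    have hrreach : (G.induce {x : V | x ≠ v ∧ x ≠ w}).Reachable x r :=
      reachable_iterate (R.par2_step v w hcl) x nn
    exact ⟨r, ⟨hnn, hrreach⟩, fun r' h' => key r' r h'.1 hnn (h'.2.symm.trans hrreach)⟩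

end Rooting

end Restrictions
section Counting

/-- The weight of an independent set. -/
noncomputable def wt (n c e : ℕ) : K :=
  Z ^ ((n : ℤ) - 2 * (c : ℤ)) * (1 - (A⁻¹) ^ 2) ^ e

lemma wt_succ (n c e : ℕ) : wt (n + 1) c e = Z * wt n c e := by
  rw [wt, wt]
  have h : ((n + 1 : ℕ) : ℤ) - 2 * (c : ℤ) = 1 + ((n : ℤ) - 2 * (c : ℤ)) := by push_cast; ring
  rw [h, zpow_add₀ Z_ne_zero, zpow_one, mul_assoc]

lemma wt_two (n c e : ℕ) : wt (n + 2) (c + 1) e = wt n c e := by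
  rw [wt, wt]
  congr 2
  push_cast; ring

lemma wt_iso (n c e : ℕ) : wt (n + 1) (c + 1) (e + 1) = Z⁻¹ * (1 - (A⁻¹) ^ 2) * wt n c e := by
  rw [wt, wt]
  have h : ((n + 1 : ℕ) : ℤ) - 2 * ((c + 1 : ℕ) : ℤ) = (-1) + ((n : ℤ) - 2 * (c : ℤ)) := by
    push_cast; ring
  rw [h, zpow_add₀ Z_ne_zero, zpow_neg_one, pow_succ]
  ring

variable {V : Type} [Fintype V] [DecidableEq V] {G : SimpleGraph V}

lemma np_le (R : Rooting G) (I : Finset V) : (parentsOf R I).ncard ≤ I.card := by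
  have h1 : parentsOf R I ⊆ R.parent '' (I : Set V) := by
    rintro x ⟨u, hu, -, rfl⟩
    exact ⟨u, hu, rfl⟩
  calc (parentsOf R I).ncard ≤ (R.parent '' (I : Set V)).ncard :=
        Set.ncard_le_ncard h1 (Set.toFinite _)
    _ ≤ (I : Set V).ncard := Set.ncard_image_le (Set.toFinite _)
    _ = I.card := Set.ncard_coe_finset I

/-- The sum of weights over all independent sets. -/
noncomputable def Ssum (G : SimpleGraph V) (R : Rooting G) (n : ℕ) : K :=
  ∑ I ∈ Finset.univ.filter (fun I : Finset V => IsIndep G I),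
    wt n I.card (I.card - (parentsOf R I).ncard)

lemma cCoeff_zero (R : Rooting G) {i j : ℕ} (hij : i < j) : cCoeff G R i j = 0 := by
  rw [cCoeff]
  convert Set.ncard_empty (Finset V)
  ext I
  simp only [Set.mem_setOf_eq, Set.mem_empty_iff_false, iff_false, not_and]
  intro h1 _ h3
  omega

/-- Grouping independent sets by size and number of parents. -/
lemma grouping (G : SimpleGraph V) (R : Rooting G) (n : ℕ) (hn : Fintype.card V = n) :
    ∑ i ∈ Finset.range (n + 1), ∑ j ∈ Finset.range (i + 1),
      (cCoeff G R i j : K) * Z ^ ((n : ℤ) - 2 * (i : ℤ)) * (1 - (A⁻¹) ^ 2) ^ j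
    = Ssum G R n := by
  have hext : ∀ i ∈ Finset.range (n + 1),
      ∑ j ∈ Finset.range (i + 1), (cCoeff G R i j : K) * Z ^ ((n : ℤ) - 2 * (i : ℤ)) *
        (1 - (A⁻¹) ^ 2) ^ j
      = ∑ j ∈ Finset.range (n + 1), (cCoeff G R i j : K) * wt n i j := by
    intro i hi
    simp only [Finset.mem_range] at hi
    have h1 : ∑ j ∈ Finset.range (i + 1), (cCoeff G R i j : K) * Z ^ ((n : ℤ) - 2 * (i : ℤ)) *
        (1 - (A⁻¹) ^ 2) ^ j = ∑ j ∈ Finset.range (i + 1), (cCoeff G R i j : K) * wt n i j :=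
      Finset.sum_congr rfl (fun j _ => by rw [wt, mul_assoc])
    rw [h1]
    refine Finset.sum_subset (Finset.range_subset_range.mpr (by omega)) ?_
    intro j hj hji
    simp only [Finset.mem_range] at hj hji
    rw [cCoeff_zero R (by omega)]
    simp
  rw [Finset.sum_congr rfl hext, ← Finset.sum_product']
  have hmaps : ∀ I ∈ Finset.univ.filter (fun I : Finset V => IsIndep G I),
      (I.card, I.card - (parentsOf R I).ncard) ∈
        Finset.range (n + 1) ×ˢ Finset.range (n + 1) := by
    intro I _
    have h1 := Finset.card_le_univ I
    simp only [Finset.mem_product, Finset.mem_range]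
    omega
  have hfib := Finset.sum_fiberwise_of_maps_to hmaps
    (fun I => wt n I.card (I.card - (parentsOf R I).ncard))
  rw [Ssum, ← hfib]
  apply Finset.sum_congr rfl
  rintro ⟨i, j⟩ _
  have hconst : ∀ I ∈ (Finset.univ.filter (fun I : Finset V => IsIndep G I)).filter
      (fun I => (I.card, I.card - (parentsOf R I).ncard) = (i, j)),
      wt n I.card (I.card - (parentsOf R I).ncard) = wt n i j := by
    intro I hI
    simp only [Finset.mem_filter, Prod.mk.injEq] at hI
    rw [hI.2.2, hI.2.1]
  rw [Finset.sum_congr rfl hconst, Finset.sum_const, nsmul_eq_mul]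
  congr 1
  have hset : {I : Finset V | I.card = i ∧ IsIndep G I ∧ (parentsOf R I).ncard + j = i}
      = ↑((Finset.univ.filter (fun I : Finset V => IsIndep G I)).filter
        (fun I => (I.card, I.card - (parentsOf R I).ncard) = (i, j))) := by
    ext I
    have hle := np_le R I
    simp only [Finset.coe_filter, Finset.mem_filter, Finset.mem_univ, true_and,
      Set.mem_setOf_eq, Prod.mk.injEq]
    constructor
    · rintro ⟨h1, h2, h3⟩
      exact ⟨h2, h1, by omega⟩
    · rintro ⟨h1, h2, h3⟩
      exact ⟨h2, h1, by omega⟩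
  rw [Nat.cast_inj, cCoeff, hset, Set.ncard_coe_finset]

lemma parentsOf_empty (R : Rooting G) : parentsOf R (∅ : Finset V) = ∅ := by
  ext x
  simp [parentsOf]

lemma parentsOf_insert (R : Rooting G) {v w : V} (hvr : v ∉ R.roots) (hw : R.parent v = w)
    (I : Finset V) : parentsOf R (insert v I) = insert w (parentsOf R I) := by
  ext x
  simp only [parentsOf, Set.mem_setOf_eq, Finset.mem_insert, Set.mem_insert_iff]
  constructor
  · rintro ⟨u, (rfl | hu), h2, rfl⟩
    · exact Or.inl hw
    · exact Or.inr ⟨u, hu, h2, rfl⟩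
  · rintro (rfl | ⟨u, hu, h2, rfl⟩)
    · exact ⟨v, Or.inl rfl, hvr, hw⟩
    · exact ⟨u, Or.inr hu, h2, rfl⟩

lemma parentsOf_insert_root (R : Rooting G) {v : V} (hvr : v ∈ R.roots)
    (I : Finset V) : parentsOf R (insert v I) = parentsOf R I := by
  ext x
  simp only [parentsOf, Set.mem_setOf_eq, Finset.mem_insert]
  constructor
  · rintro ⟨u, (rfl | hu), h2, rfl⟩
    · exact absurd hvr h2
    · exact ⟨u, hu, h2, rfl⟩
  · rintro ⟨u, hu, h2, rfl⟩
    exact ⟨u, Or.inr hu, h2, rfl⟩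

end Counting
section Transfer

variable {V : Type} [Fintype V] [DecidableEq V] {G : SimpleGraph V}

lemma subtype_map_inv {p : V → Prop} [DecidablePred p] (J : Finset (Subtype p)) :
    (J.map (Function.Embedding.subtype p)).subtype p = J := by
  ext a
  simp only [Finset.mem_subtype, Finset.mem_map, Function.Embedding.coe_subtype]
  constructor
  · rintro ⟨b, hb, hba⟩
    rwa [Subtype.val_injective hba] at hb
  · intro h
    exact ⟨a, h, rfl⟩

lemma map_subtype_self {p : V → Prop} [DecidablePred p] (I : Finset V)
    (h : ∀ x ∈ I, p x) : (I.subtype p).map (Function.Embedding.subtype p) = I := by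
  rw [Finset.subtype_map, Finset.filter_true_of_mem h]

lemma card_subtype_of_mem {p : V → Prop} [DecidablePred p] (I : Finset V)
    (h : ∀ x ∈ I, p x) : (I.subtype p).card = I.card := by
  rw [← Finset.card_map (Function.Embedding.subtype p), map_subtype_self I h]

lemma indep_map {s : Set V} {J : Finset ↥s} :
    IsIndep (G.induce s) J ↔ IsIndep G (J.map (Function.Embedding.subtype _)) := by
  constructor
  · intro h x hx y hy hadj
    simp only [Finset.mem_map, Function.Embedding.coe_subtype] at hx hy
    obtain ⟨a, ha, rfl⟩ := hx
    obtain ⟨b, hb, rfl⟩ := hy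
    exact h a ha b hb hadj
  · intro h a ha b hb hadj
    refine h (a : V) ?_ (b : V) ?_ hadj
    · simp only [Finset.mem_map, Function.Embedding.coe_subtype]
      exact ⟨a, ha, rfl⟩
    · simp only [Finset.mem_map, Function.Embedding.coe_subtype]
      exact ⟨b, hb, rfl⟩

namespace Rooting

variable (R : Rooting G)

lemma np1_eq {v : V} (hcl : ∀ u, u ∉ R.roots → R.parent u ≠ v)
    (J : Finset ↥{x : V | x ≠ v}) :
    (parentsOf (R.restrict1 v hcl) J).ncard
      = (parentsOf R (J.map (Function.Embedding.subtype _))).ncard := by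
  have himg : Subtype.val '' parentsOf (R.restrict1 v hcl) J
      = parentsOf R (J.map (Function.Embedding.subtype _)) := by
    ext x
    simp only [parentsOf, restrict1, par1, Set.mem_image, Set.mem_setOf_eq,
      Finset.mem_map, Function.Embedding.coe_subtype]
    constructor
    · rintro ⟨y, ⟨a, haJ, har, hpy⟩, rfl⟩
      refine ⟨(a : V), ⟨a, haJ, rfl⟩, har, ?_⟩
      rw [← hpy]
    · rintro ⟨u, ⟨a, haJ, rfl⟩, har, rfl⟩
      exact ⟨⟨R.parent (a : V), R.parent_ne hcl a.prop⟩, ⟨a, haJ, har, rfl⟩, rfl⟩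
  rw [← himg, Set.ncard_image_of_injective _ Subtype.val_injective]

lemma np2_eq (hforest : G.IsAcyclic) {v w : V} (hcl : ∀ u, u ∉ R.roots → R.parent u ≠ v)
    (J : Finset ↥{x : V | x ≠ v ∧ x ≠ w}) :
    (parentsOf (R.restrict2 hforest v w hcl) J).ncard
      = (parentsOf R (J.map (Function.Embedding.subtype _)) \ {w}).ncard := by
  have himg : Subtype.val '' parentsOf (R.restrict2 hforest v w hcl) J
      = parentsOf R (J.map (Function.Embedding.subtype _)) \ {w} := by
    ext x
    simp only [parentsOf, restrict2, par2, Set.mem_image, Set.mem_setOf_eq,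
      Finset.mem_map, Function.Embedding.coe_subtype, Set.mem_diff, Set.mem_singleton_iff]
    constructor
    · rintro ⟨y, ⟨a, haJ, har, hpy⟩, rfl⟩
      have har' : ¬ ((a : V) ∈ R.roots ∨ R.parent (a : V) = w) := har
      push_neg at har'
      rw [dif_neg har'.2] at hpy
      refine ⟨⟨(a : V), ⟨a, haJ, rfl⟩, har'.1, by rw [← hpy]⟩, ?_⟩
      rw [← hpy]
      exact har'.2
    · rintro ⟨⟨u, ⟨a, haJ, rfl⟩, har, rfl⟩, hxw⟩
      refine ⟨⟨R.parent (a : V), ⟨R.parent_ne hcl a.prop.1, hxw⟩⟩,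
        ⟨a, haJ, ?_, by rw [dif_neg hxw]⟩, rfl⟩
      intro hmem
      rcases hmem with h | h
      · exact har h
      · exact hxw h
  rw [← himg, Set.ncard_image_of_injective _ Subtype.val_injective]

lemma np_insert {v w : V} (hvr : v ∉ R.roots) (hw : R.parent v = w) (I : Finset V) :
    (parentsOf R (insert v I)).ncard = (parentsOf R I \ {w}).ncard + 1 := by
  rw [parentsOf_insert R hvr hw, ← Set.insert_diff_singleton,
    Set.ncard_insert_of_notMem (by simp) (Set.toFinite _)]

/-- The sum over independent sets avoiding a childless vertex `v`. -/
lemma sum_notmem {v : V} (hcl : ∀ u, u ∉ R.roots → R.parent u ≠ v) (m : ℕ) :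
    ∑ I ∈ (Finset.univ.filter (fun I : Finset V => IsIndep G I)).filter
        (fun I => ¬ v ∈ I), wt m I.card (I.card - (parentsOf R I).ncard)
    = ∑ J ∈ Finset.univ.filter (fun J : Finset ↥{x : V | x ≠ v} =>
        IsIndep (G.induce {x : V | x ≠ v}) J),
        wt m J.card (J.card - (parentsOf (R.restrict1 v hcl) J).ncard) := by
  refine Finset.sum_nbij' (fun I => I.subtype (fun x => x ∈ {x : V | x ≠ v}))
    (fun J => J.map (Function.Embedding.subtype _)) ?_ ?_ ?_ ?_ ?_
  · intro I hI
    simp only [Finset.mem_filter, Finset.mem_univ, true_and] at hI ⊢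
    have hmem : ∀ x ∈ I, x ∈ {x : V | x ≠ v} := by
      intro x hx
      simp only [Set.mem_setOf_eq]
      rintro rfl
      exact hI.2 hx
    rw [indep_map, map_subtype_self I hmem]
    exact hI.1
  · intro J hJ
    simp only [Finset.mem_filter, Finset.mem_univ, true_and] at hJ ⊢
    constructor
    · rw [← indep_map]; exact hJ
    · intro hv
      simp only [Finset.mem_map, Function.Embedding.coe_subtype] at hv
      obtain ⟨a, -, ha⟩ := hv
      exact a.prop ha
  · intro I hI
    simp only [Finset.mem_filter, Finset.mem_univ, true_and] at hI
    refine map_subtype_self I ?_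
    intro x hx
    simp only [Set.mem_setOf_eq]
    rintro rfl
    exact hI.2 hx
  · intro J _
    exact subtype_map_inv J
  · intro I hI
    simp only [Finset.mem_filter, Finset.mem_univ, true_and] at hI
    have hmem : ∀ x ∈ I, x ∈ {x : V | x ≠ v} := by
      intro x hx
      simp only [Set.mem_setOf_eq]
      rintro rfl
      exact hI.2 hx
    have hmap : (I.subtype (fun x => x ∈ {x : V | x ≠ v})).map
        (Function.Embedding.subtype _) = I := map_subtype_self I hmem
    rw [R.np1_eq hcl, hmap, card_subtype_of_mem I hmem]

/-- The sum over independent sets containing an isolated root `v`. -/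
lemma sum_mem_iso {v : V} (hcl : ∀ u, u ∉ R.roots → R.parent u ≠ v)
    (hvr : v ∈ R.roots) (hiso : ∀ x, ¬ G.Adj v x) (n : ℕ) :
    ∑ I ∈ (Finset.univ.filter (fun I : Finset V => IsIndep G I)).filter
        (fun I => v ∈ I), wt (n + 1) I.card (I.card - (parentsOf R I).ncard)
    = ∑ J ∈ Finset.univ.filter (fun J : Finset ↥{x : V | x ≠ v} =>
        IsIndep (G.induce {x : V | x ≠ v}) J),
        Z⁻¹ * (1 - (A⁻¹) ^ 2) *
          wt n J.card (J.card - (parentsOf (R.restrict1 v hcl) J).ncard) := by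
  have hmem0 : ∀ (I : Finset V), ∀ x ∈ I.erase v, x ∈ {x : V | x ≠ v} :=
    fun I x hx => Finset.ne_of_mem_erase hx
  refine Finset.sum_nbij' (fun I => (I.erase v).subtype (fun x => x ∈ {x : V | x ≠ v}))
    (fun J => insert v (J.map (Function.Embedding.subtype _))) ?_ ?_ ?_ ?_ ?_
  · intro I hI
    simp only [Finset.mem_filter, Finset.mem_univ, true_and] at hI ⊢
    rw [indep_map, map_subtype_self _ (hmem0 I)]
    intro x hx y hy
    exact hI.1 x (Finset.mem_of_mem_erase hx) y (Finset.mem_of_mem_erase hy)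
  · intro J hJ
    simp only [Finset.mem_filter, Finset.mem_univ, true_and] at hJ ⊢
    refine ⟨?_, Finset.mem_insert_self _ _⟩
    intro x hx y hy hadj
    rcases Finset.mem_insert.mp hx with rfl | hx'
    · exact hiso y hadj
    · rcases Finset.mem_insert.mp hy with rfl | hy'
      · exact hiso x hadj.symm
      · exact (indep_map.mp hJ) x hx' y hy' hadj
  · intro I hI
    simp only [Finset.mem_filter, Finset.mem_univ, true_and] at hI
    rw [map_subtype_self _ (hmem0 I), Finset.insert_erase hI.2]
  · intro J hJ
    have hv : v ∉ J.map (Function.Embedding.subtype _) := by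
      simp only [Finset.mem_map, Function.Embedding.coe_subtype]
      rintro ⟨a, -, ha⟩
      exact a.prop ha
    rw [Finset.erase_insert hv, subtype_map_inv J]
  · intro I hI
    simp only [Finset.mem_filter, Finset.mem_univ, true_and] at hI
    have hIe : I = insert v (I.erase v) := (Finset.insert_erase hI.2).symm
    have hmap : ((I.erase v).subtype (fun x => x ∈ {x : V | x ≠ v})).map
        (Function.Embedding.subtype _) = I.erase v := map_subtype_self _ (hmem0 I)
    have hnp : (parentsOf R I).ncard = (parentsOf R (I.erase v)).ncard := by
      conv_lhs => rw [hIe]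
      rw [parentsOf_insert_root R hvr]
    have hcard : I.card = (I.erase v).card + 1 := by
      rw [Finset.card_erase_of_mem hI.2]
      have : 0 < I.card := Finset.card_pos.mpr ⟨v, hI.2⟩
      omega
    rw [R.np1_eq hcl, hmap, card_subtype_of_mem _ (hmem0 I), hnp, hcard]
    have hle : (parentsOf R (I.erase v)).ncard ≤ (I.erase v).card := np_le R _
    have he : (I.erase v).card + 1 - (parentsOf R (I.erase v)).ncard
        = ((I.erase v).card - (parentsOf R (I.erase v)).ncard) + 1 := by omega
    rw [he, wt_iso]

/-- The sum over independent sets containing a childless leaf `v` with parent `w`. -/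
lemma sum_mem_leaf (hforest : G.IsAcyclic) {v w : V}
    (hcl : ∀ u, u ∉ R.roots → R.parent u ≠ v)
    (hvr : v ∉ R.roots) (hw : R.parent v = w) (n : ℕ) :
    ∑ I ∈ (Finset.univ.filter (fun I : Finset V => IsIndep G I)).filter
        (fun I => v ∈ I), wt (n + 2) I.card (I.card - (parentsOf R I).ncard)
    = ∑ J ∈ Finset.univ.filter (fun J : Finset ↥{x : V | x ≠ v ∧ x ≠ w} =>
        IsIndep (G.induce {x : V | x ≠ v ∧ x ≠ w}) J),
        wt n J.card (J.card - (parentsOf (R.restrict2 hforest v w hcl) J).ncard) := by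
  have hadj : G.Adj v w := hw ▸ R.adj_parent v hvr
  have hmem0 : ∀ (I : Finset V), IsIndep G I → v ∈ I →
      ∀ x ∈ I.erase v, x ∈ {x : V | x ≠ v ∧ x ≠ w} := by
    intro I hind hv x hx
    refine ⟨Finset.ne_of_mem_erase hx, ?_⟩
    rintro rfl
    exact hind v hv x (Finset.mem_of_mem_erase hx) hadj
  refine Finset.sum_nbij' (fun I => (I.erase v).subtype
      (fun x => x ∈ {x : V | x ≠ v ∧ x ≠ w}))
    (fun J => insert v (J.map (Function.Embedding.subtype _))) ?_ ?_ ?_ ?_ ?_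
  · intro I hI
    simp only [Finset.mem_filter, Finset.mem_univ, true_and] at hI ⊢
    have hsub : ((I.erase v).subtype (fun x => x ∈ {x : V | x ≠ v ∧ x ≠ w})).map
        (Function.Embedding.subtype _) ⊆ I := by
      intro x hx
      rw [Finset.subtype_map] at hx
      exact Finset.mem_of_mem_erase (Finset.mem_of_mem_filter _ hx)
    rw [indep_map]
    intro x hx y hy
    exact hI.1 x (hsub hx) y (hsub hy)
  · intro J hJ
    simp only [Finset.mem_filter, Finset.mem_univ, true_and] at hJ ⊢
    refine ⟨?_, Finset.mem_insert_self _ _⟩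
    intro x hx y hy hxy
    rcases Finset.mem_insert.mp hx with rfl | hx'
    · rcases Finset.mem_insert.mp hy with rfl | hy'
      · exact G.irrefl hxy
      · simp only [Finset.mem_map, Function.Embedding.coe_subtype] at hy'
        obtain ⟨b, -, rfl⟩ := hy'
        exact b.prop.2 (((R.childless_adj hforest hcl hxy).2.symm.trans hw).symm).symm
    · rcases Finset.mem_insert.mp hy with rfl | hy'
      · simp only [Finset.mem_map, Function.Embedding.coe_subtype] at hx'
        obtain ⟨b, -, rfl⟩ := hx'
        exact b.prop.2 (((R.childless_adj hforest hcl hxy.symm).2.symm.trans hw).symm).symm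
      · exact (indep_map.mp hJ) x hx' y hy' hxy
  · intro I hI
    simp only [Finset.mem_filter, Finset.mem_univ, true_and] at hI
    rw [map_subtype_self _ (hmem0 I hI.1 hI.2), Finset.insert_erase hI.2]
  · intro J hJ
    have hv : v ∉ J.map (Function.Embedding.subtype _) := by
      simp only [Finset.mem_map, Function.Embedding.coe_subtype]
      rintro ⟨a, -, ha⟩
      exact a.prop.1 ha
    rw [Finset.erase_insert hv, subtype_map_inv J]
  · intro I hI
    simp only [Finset.mem_filter, Finset.mem_univ, true_and] at hI
    have hIe : I = insert v (I.erase v) := (Finset.insert_erase hI.2).symm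
    have hmap : ((I.erase v).subtype (fun x => x ∈ {x : V | x ≠ v ∧ x ≠ w})).map
        (Function.Embedding.subtype _) = I.erase v := map_subtype_self _ (hmem0 I hI.1 hI.2)
    have hnp : (parentsOf R I).ncard = (parentsOf R (I.erase v) \ {w}).ncard + 1 := by
      conv_lhs => rw [hIe]
      exact R.np_insert hvr hw (I.erase v)
    have hcard : I.card = (I.erase v).card + 1 := by
      rw [Finset.card_erase_of_mem hI.2]
      have : 0 < I.card := Finset.card_pos.mpr ⟨v, hI.2⟩
      omega
    rw [R.np2_eq hforest hcl, hmap, card_subtype_of_mem _ (hmem0 I hI.1 hI.2), hnp, hcard]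
    have hle : (parentsOf R (I.erase v) \ {w}).ncard ≤ (I.erase v).card := by
      calc (parentsOf R (I.erase v) \ {w}).ncard ≤ (parentsOf R (I.erase v)).ncard :=
            Set.ncard_le_ncard Set.diff_subset (Set.toFinite _)
        _ ≤ (I.erase v).card := np_le R _
    have he : (I.erase v).card + 1 - ((parentsOf R (I.erase v) \ {w}).ncard + 1)
        = (I.erase v).card - (parentsOf R (I.erase v) \ {w}).ncard := by omega
    rw [he, wt_two]

/-- Leaf recursion for the weighted sum. -/
lemma Ssum_leaf (hforest : G.IsAcyclic) {v w : V}
    (hcl : ∀ u, u ∉ R.roots → R.parent u ≠ v)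
    (hvr : v ∉ R.roots) (hw : R.parent v = w) (n : ℕ) :
    Ssum G R (n + 2)
      = Z * Ssum (G.induce {x : V | x ≠ v}) (R.restrict1 v hcl) (n + 1)
      + Ssum (G.induce {x : V | x ≠ v ∧ x ≠ w}) (R.restrict2 hforest v w hcl) n := by
  rw [Ssum, ← Finset.sum_filter_add_sum_filter_not
    (Finset.univ.filter (fun I : Finset V => IsIndep G I)) (fun I => v ∈ I)]
  rw [R.sum_mem_leaf hforest hcl hvr hw n, R.sum_notmem hcl (n + 2)]
  rw [add_comm]
  congr 1
  rw [Ssum, Finset.mul_sum]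
  apply Finset.sum_congr rfl
  intro J _
  rw [wt_succ]

/-- Isolated-vertex recursion for the weighted sum. -/
lemma Ssum_iso {v : V} (hcl : ∀ u, u ∉ R.roots → R.parent u ≠ v)
    (hvr : v ∈ R.roots) (hiso : ∀ x, ¬ G.Adj v x) (n : ℕ) :
    Ssum G R (n + 1)
      = Z * Ssum (G.induce {x : V | x ≠ v}) (R.restrict1 v hcl) n
      + Z⁻¹ * (1 - (A⁻¹) ^ 2) * Ssum (G.induce {x : V | x ≠ v}) (R.restrict1 v hcl) n := by
  rw [Ssum, ← Finset.sum_filter_add_sum_filter_not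
    (Finset.univ.filter (fun I : Finset V => IsIndep G I)) (fun I => v ∈ I)]
  rw [R.sum_mem_iso hcl hvr hiso n, R.sum_notmem hcl (n + 1)]
  rw [add_comm]
  congr 1
  · rw [Ssum, Finset.mul_sum]
    apply Finset.sum_congr rfl
    intro J _
    rw [wt_succ]
  · rw [Ssum, Finset.mul_sum]

end Rooting

end Transfer
lemma f_irrel (f : GraphFun) {W : Type} (i1 i1' : Fintype W) (i2 i2' : DecidableEq W)
    (H : SimpleGraph W) : @f W i1 i2 H = @f W i1' i2' H := by
  have e2 : i2 = i2' := by
    funext a b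
    exact Subsingleton.elim _ _
  cases Subsingleton.elim i1 i1'
  cases e2
  rfl

theorem homfly_aux : ∀ n : ℕ, ∀ (V : Type) [Fintype V] [DecidableEq V],
    ∀ (G : SimpleGraph V), G.IsAcyclic → ∀ (R : Rooting G), Fintype.card V = n →
    ∀ (f : GraphFun), HomflyRules f → f V G = (A⁻¹) ^ n * Ssum G R n := by
  intro n
  induction n using Nat.strong_induction_on with
  | _ n IH =>
  intro V _ _ G hforest R hn f hf
  cases n with
  | zero =>
    have hemp : IsEmpty V := Fintype.card_eq_zero_iff.mp hn
    rw [hf.1 V G hemp, pow_zero, one_mul, Ssum]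
    have huniv : Finset.univ.filter (fun I : Finset V => IsIndep G I) = {∅} := by
      ext I
      simp only [Finset.mem_filter, Finset.mem_univ, true_and, Finset.mem_singleton]
      constructor
      · intro _
        rw [Finset.eq_empty_iff_forall_notMem]
        intro x _
        exact hemp.elim x
      · rintro rfl
        intro x hx
        exact absurd hx (Finset.notMem_empty x)
    rw [huniv, Finset.sum_singleton, Finset.card_empty, parentsOf_empty, Set.ncard_empty, wt]
    norm_num
  | succ n =>
    have hne : Nonempty V := by
      rw [← Fintype.card_pos_iff]; omega
    obtain ⟨v, hcl⟩ := R.exists_childless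
    by_cases hvr : v ∈ R.roots
    · -- v is an isolated vertex
      have hiso : ∀ x, ¬ G.Adj v x := fun x hx => ((R.childless_adj hforest hcl hx).1) hvr
      have hcross : ∀ x ∈ {x : V | x ≠ v}, ∀ y ∉ {x : V | x ≠ v}, ¬ G.Adj x y := by
        intro x _ y hy hadj
        have hyv : y = v := not_not.mp hy
        rw [hyv] at hadj
        exact hiso x hadj.symm
      have hcard1 : Fintype.card ↥{x : V | x ≠ v} = n := by
        rw [Fintype.card_subtype]
        have hfe : Finset.univ.filter (fun x : V => x ∈ {x : V | x ≠ v})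
            = Finset.univ.erase v := by
          ext x
          simp [Finset.mem_erase]
        rw [hfe, Finset.card_erase_of_mem (Finset.mem_univ v), Finset.card_univ, hn]
        omega
      have hc1 : Fintype.card ↥({x : V | x ≠ v}ᶜ) = 1 := by
        refine Fintype.card_eq_one_iff.mpr ⟨⟨v, by simp⟩, fun y => Subtype.ext ?_⟩
        have := y.prop
        simp only [Set.mem_compl_iff, Set.mem_setOf_eq, not_not] at this
        exact this
      have hprod := hf.2.2.2 V G hforest {x : V | x ≠ v} hcross
      rw [f_irrel f _ inferInstance _ inferInstance (G.induce {x : V | x ≠ v}),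
        f_irrel f _ inferInstance _ inferInstance (G.induce {x : V | x ≠ v}ᶜ)] at hprod
      rw [hprod, hf.2.1 _ _ hc1,
        IH n (by omega) ↥{x : V | x ≠ v} (G.induce _) (isAcyclic_induce hforest _)
          (R.restrict1 v hcl) hcard1 f hf,
        R.Ssum_iso hcl hvr hiso n, single_value]
      ring
    · -- v is a leaf with parent w
      set w := R.parent v with hwdef
      have hadj : G.Adj v w := R.adj_parent v hvr
      have hvw : v ≠ w := hadj.ne
      have h2 : 2 ≤ Fintype.card V := Fintype.one_lt_card_iff.mpr ⟨v, w, hvw⟩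
      obtain ⟨m, rfl⟩ : ∃ m, n = m + 1 := ⟨n - 1, by omega⟩
      have hleaf : IsLeaf G v w := by
        rw [IsLeaf]
        ext x
        simp only [SimpleGraph.mem_neighborSet, Set.mem_singleton_iff]
        constructor
        · intro hx
          exact (R.childless_adj hforest hcl hx).2.symm.trans hwdef.symm
        · rintro rfl
          exact hadj
      have hcard1 : Fintype.card ↥{x : V | x ≠ v} = m + 1 := by
        rw [Fintype.card_subtype]
        have hfe : Finset.univ.filter (fun x : V => x ∈ {x : V | x ≠ v})
            = Finset.univ.erase v := by
          ext x
          simp [Finset.mem_erase]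
        rw [hfe, Finset.card_erase_of_mem (Finset.mem_univ v), Finset.card_univ, hn]
        omega
      have hcard2 : Fintype.card ↥{x : V | x ≠ v ∧ x ≠ w} = m := by
        rw [Fintype.card_subtype]
        have hfe : Finset.univ.filter (fun x : V => x ∈ {x : V | x ≠ v ∧ x ≠ w})
            = (Finset.univ.erase w).erase v := by
          ext x
          simp only [Finset.mem_filter, Finset.mem_univ, true_and, Set.mem_setOf_eq,
            Finset.mem_erase, and_true]
          try tauto
        rw [hfe, Finset.card_erase_of_mem
          (Finset.mem_erase.mpr ⟨hvw, Finset.mem_univ v⟩),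
          Finset.card_erase_of_mem (Finset.mem_univ w), Finset.card_univ, hn]
        omega
      rw [hf.2.2.1 V G hforest v w hleaf,
        IH (m + 1) (by omega) ↥{x : V | x ≠ v} (G.induce _) (isAcyclic_induce hforest _)
          (R.restrict1 v hcl) hcard1 f hf,
        IH m (by omega) ↥{x : V | x ≠ v ∧ x ≠ w} (G.induce _) (isAcyclic_induce hforest _)
          (R.restrict2 hforest v w hcl) hcard2 f hf,
        R.Ssum_leaf hforest hcl hvr hwdef.symm m,
        div_eq_mul_inv, one_div, ← inv_pow]
      ring
/-- Closed form for the HOMFLY polynomial of a forest on `n` vertices: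
`f(Q) = a^{−n} Σ_{i,j} c_{i,j}(Q) z^{n−2i} (1 − a^{−2})^j`. -/
theorem homfly_closed_form (f : GraphFun) (hf : HomflyRules f)
    {V : Type} [Fintype V] [DecidableEq V] (G : SimpleGraph V)
    (hforest : G.IsAcyclic) (R : Rooting G) (n : ℕ) (hn : Fintype.card V = n) :
    f V G = (A⁻¹) ^ n *
      ∑ i ∈ Finset.range (n + 1), ∑ j ∈ Finset.range (i + 1),
        (cCoeff G R i j : K) * Z ^ ((n : ℤ) - 2 * (i : ℤ)) * (1 - (A⁻¹) ^ 2) ^ j := by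
  rw [grouping G R n hn]
  exact homfly_aux n V G hforest R hn f hf
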